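/- (Theorem 2.1) Let H, J, K be 4×4 real matrices satisfying the Hamiltonian conditions H² = J² = K² = HJK = −E, with associated block map P. For any quaternion matrix A ∈ ℍ^{m×n} with m ≥ n ≥ 1, there exists a nonnegative integer s with 0 ≤ s ≤ n such that the rank of the 4m×4n real matrix P(A) equals 4s. In particular, 4 divides rank(P(A)) and rank(P(A)) ≤ 4n. -/

import Mathlib

open Matrix

/-- The real `4×4` matrix representation of a quaternion determined by matrices
`H, J, K` (assumed to satisfy the Hamiltonian conditions). -/
noncomputable def qRep (H J K : Matrix (Fin 4) (Fin 4) ℝ) (q : Quaternion ℝ) :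
    Matrix (Fin 4) (Fin 4) ℝ :=
  q.re • (1 : Matrix (Fin 4) (Fin 4) ℝ) + q.imI • H + q.imJ • J + q.imK • K

section Aux

variable {H J K : Matrix (Fin 4) (Fin 4) ℝ}

private lemma qRep_mul (hH : H * H = -1) (hJ : J * J = -1) (hK : K * K = -1)
    (hHJK : H * J * K = -1) (p q : Quaternion ℝ) :
    qRep H J K (p * q) = qRep H J K p * qRep H J K q := by
  have hHJ : H * J = K := by
    have h : H * J * (K * K) = -1 * K := by rw [← mul_assoc, hHJK]
    rwa [hK, mul_neg_one, neg_one_mul, neg_inj] at h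
  have hKJ : K * J = -H := by rw [← hHJ, mul_assoc, hJ, mul_neg_one]
  have hHK : H * K = -J := by rw [← hHJ, ← mul_assoc, hH, neg_one_mul]
  have hKH : K * H = J := by
    have h : K * (K * J) = K * (-H) := by rw [hKJ]
    rwa [← mul_assoc, hK, neg_one_mul, mul_neg, neg_inj, eq_comm] at h
  have hJH : J * H = -K := by rw [← hKH, mul_assoc, hH, mul_neg_one]
  have hJK : J * K = H := by
    rw [← hHJ, ← mul_assoc, hJH, neg_mul, hKJ, neg_neg]
  simp only [qRep, Quaternion.re_mul, Quaternion.imI_mul, Quaternion.imJ_mul, Quaternion.imK_mul,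
    add_mul, mul_add, smul_mul_assoc, mul_smul_comm, one_mul, mul_one,
    hH, hJ, hK, hHJ, hJH, hHK, hKH, hJK, hKJ, smul_smul]
  module

private lemma qRep_add (p q : Quaternion ℝ) :
    qRep H J K (p + q) = qRep H J K p + qRep H J K q := by
  simp only [qRep, Quaternion.re_add, Quaternion.imI_add, Quaternion.imJ_add, Quaternion.imK_add]
  module

private lemma qRep_smul (r : ℝ) (q : Quaternion ℝ) :
    qRep H J K (r • q) = r • qRep H J K q := by
  simp only [qRep, Quaternion.re_smul, Quaternion.imI_smul, Quaternion.imJ_smul,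
    Quaternion.imK_smul, smul_eq_mul]
  module

private lemma qRep_real (r : ℝ) :
    qRep H J K ((r : Quaternion ℝ)) = r • 1 := by
  simp [qRep]

end Aux

section Aux2

variable (e : Quaternion ℝ ≃ₗ[ℝ] (Fin 4 → ℝ))

/-- Blockwise interpretation of a quaternion vector as a real vector. -/
private noncomputable def bigE {ι : Type*} (w : ι → Quaternion ℝ) : ι × Fin 4 → ℝ :=
  fun p => e (w p.1) p.2

private lemma bigE_surj {ι : Type*} (x : ι × Fin 4 → ℝ) :
    bigE e (fun s => e.symm (fun l => x (s, l))) = x := by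
  funext p
  simp [bigE]

/-- The commutant action: right multiplication by `star q` transported through `e`,
blockwise. -/
private noncomputable def blockSMul {ι : Type*} (q : Quaternion ℝ) :
    ((ι × Fin 4) → ℝ) →ₗ[ℝ] ((ι × Fin 4) → ℝ) where
  toFun x := fun p => e ((e.symm fun l => x (p.1, l)) * star q) p.2
  map_add' x y := by
    funext p
    have h : e.symm (fun l => x (p.1, l) + y (p.1, l))
        = e.symm (fun l => x (p.1, l)) + e.symm (fun l => y (p.1, l)) := by
      rw [show (fun l => x (p.1, l) + y (p.1, l))
          = (fun l => x (p.1, l)) + fun l => y (p.1, l) from rfl, map_add]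
    simp [h, add_mul]
  map_smul' r x := by
    funext p
    have h : e.symm (fun l => r * x (p.1, l)) = r • e.symm (fun l => x (p.1, l)) := by
      rw [show (fun l => r * x (p.1, l)) = r • fun l => x (p.1, l) from rfl, _root_.map_smul]
    simp [h, smul_mul_assoc]

private lemma blockSMul_bigE {ι : Type*} (q : Quaternion ℝ) (w : ι → Quaternion ℝ) :
    blockSMul e q (bigE e w) = bigE e (fun t => w t * star q) := by
  funext p
  simp [blockSMul, bigE]

private lemma blockSMul_one {ι : Type*} (x : (ι × Fin 4) → ℝ) :
    blockSMul e 1 x = x := by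
  funext p
  simp [blockSMul]

private lemma blockSMul_mul {ι : Type*} (q q' : Quaternion ℝ) (x : (ι × Fin 4) → ℝ) :
    blockSMul e (q * q') x = blockSMul e q (blockSMul e q' x) := by
  funext p
  simp only [blockSMul, LinearMap.coe_mk, AddHom.coe_mk]
  rw [show (fun l => e ((e.symm fun l' => x (p.1, l')) * star q') l)
      = e ((e.symm fun l' => x (p.1, l')) * star q') from rfl]
  rw [e.symm_apply_apply, StarMul.star_mul, mul_assoc]

private lemma blockSMul_addq {ι : Type*} (q q' : Quaternion ℝ) (x : (ι × Fin 4) → ℝ) :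
    blockSMul e (q + q') x = blockSMul e q x + blockSMul e q' x := by
  funext p
  simp [blockSMul, mul_add]

private lemma blockSMul_zeroq {ι : Type*} (x : (ι × Fin 4) → ℝ) :
    blockSMul e (0 : Quaternion ℝ) x = 0 := by
  funext p
  simp [blockSMul]

private lemma blockSMul_smulq {ι : Type*} (r : ℝ) (q : Quaternion ℝ) (x : (ι × Fin 4) → ℝ) :
    blockSMul e (r • q) x = r • blockSMul e q x := by
  funext p
  simp [blockSMul, star_smul, mul_smul_comm]

end Aux2

/-- The block real matrix representation of a quaternion matrix: the `(s,t)` block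
of `pRep H J K A` is `qRep H J K (A s t)`. -/
noncomputable def pRep (H J K : Matrix (Fin 4) (Fin 4) ℝ) {m n : ℕ}
    (A : Matrix (Fin m) (Fin n) (Quaternion ℝ)) :
    Matrix (Fin m × Fin 4) (Fin n × Fin 4) ℝ :=
  Matrix.of fun p q => qRep H J K (A p.1 q.1) p.2 q.2

section Aux3

variable {H J K : Matrix (Fin 4) (Fin 4) ℝ} (e : Quaternion ℝ ≃ₗ[ℝ] (Fin 4 → ℝ))

private lemma pRep_mulVec_bigE
    (hmul : ∀ a u : Quaternion ℝ, (qRep H J K a).mulVec (e u) = e (a * u))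
    {m n : ℕ} (A : Matrix (Fin m) (Fin n) (Quaternion ℝ)) (w : Fin n → Quaternion ℝ) :
    (pRep H J K A).mulVec (bigE e w) = bigE e (A.mulVec w) := by
  funext p
  have h1 : ∀ t : Fin n, ∑ l, qRep H J K (A p.1 t) p.2 l * e (w t) l
      = e (A p.1 t * w t) p.2 := by
    intro t
    have h := congrFun (hmul (A p.1 t) (w t)) p.2
    simpa [Matrix.mulVec, dotProduct] using h
  simp only [Matrix.mulVec, dotProduct, pRep, bigE, Matrix.of_apply, Fintype.sum_prod_type]
  rw [Finset.sum_congr rfl (fun t _ => h1 t), ← Finset.sum_apply, ← map_sum]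

private lemma exists_e (hH : H * H = -1) (hJ : J * J = -1) (hK : K * K = -1)
    (hHJK : H * J * K = -1) :
    ∃ e : Quaternion ℝ ≃ₗ[ℝ] (Fin 4 → ℝ),
      ∀ a u : Quaternion ℝ, (qRep H J K a).mulVec (e u) = e (a * u) := by
  classical
  set v : Fin 4 → ℝ := Pi.single 0 1 with hv
  let M : Quaternion ℝ →ₗ[ℝ] (Fin 4 → ℝ) :=
    { toFun := fun q => (qRep H J K q).mulVec v
      map_add' := fun p q => by rw [qRep_add, Matrix.add_mulVec]
      map_smul' := fun r q => by
        rw [qRep_smul, RingHom.id_apply, Matrix.smul_mulVec] }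
  have hMapp : ∀ q, M q = (qRep H J K q).mulVec v := fun _ => rfl
  have hinj : Function.Injective M := by
    rw [← LinearMap.ker_eq_bot, LinearMap.ker_eq_bot']
    intro q hq
    have h0 : (qRep H J K (star q)).mulVec (M q) = (Quaternion.normSq q : ℝ) • v := by
      rw [hMapp, Matrix.mulVec_mulVec, ← qRep_mul hH hJ hK hHJK, Quaternion.star_mul_self]
      rw [show ((Quaternion.normSq q : ℝ) : Quaternion ℝ) = ((Quaternion.normSq q : ℝ) : Quaternion ℝ) from rfl]
      rw [qRep_real, Matrix.smul_mulVec, Matrix.one_mulVec]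
    rw [hq, Matrix.mulVec_zero] at h0
    have hv0 : v ≠ 0 := by
      intro h
      have := congrFun h 0
      simp [hv] at this
    have hns : (Quaternion.normSq q : ℝ) = 0 := by
      by_contra hns
      exact hv0 (by simpa [smul_eq_zero, hns] using h0.symm)
    exact Quaternion.normSq_eq_zero.mp hns
  have hdim : Module.finrank ℝ (Quaternion ℝ) = Module.finrank ℝ (Fin 4 → ℝ) := by
    rw [Quaternion.finrank_eq_four, Module.finrank_fin_fun]
  refine ⟨M.linearEquivOfInjective hinj hdim, fun a u => ?_⟩
  rw [LinearMap.linearEquivOfInjective_apply, LinearMap.linearEquivOfInjective_apply,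
    hMapp, hMapp, Matrix.mulVec_mulVec, ← qRep_mul hH hJ hK hHJK]

end Aux3

/-- Theorem 2.1: for `A ∈ ℍ^{m×n}` with `m ≥ n ≥ 1`, the rank of
`P(A)` equals `4s` for some `0 ≤ s ≤ n`. -/
theorem pRep_rank (H J K : Matrix (Fin 4) (Fin 4) ℝ)
    (hH : H * H = -1) (hJ : J * J = -1) (hK : K * K = -1)
    (hHJK : H * J * K = -1) {m n : ℕ} (hn : 1 ≤ n) (hmn : n ≤ m)
    (A : Matrix (Fin m) (Fin n) (Quaternion ℝ)) :
    ∃ s : ℕ, s ≤ n ∧ (pRep H J K A).rank = 4 * s := by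
  classical
  obtain ⟨e, hmul⟩ := exists_e hH hJ hK hHJK
  set W := LinearMap.range (pRep H J K A).mulVecLin with hW
  have hcomm : ∀ (q : Quaternion ℝ) (y : Fin n × Fin 4 → ℝ),
      blockSMul e q ((pRep H J K A).mulVec y) = (pRep H J K A).mulVec (blockSMul e q y) := by
    intro q y
    obtain ⟨w, rfl⟩ : ∃ w, bigE e w = y := ⟨_, bigE_surj e y⟩
    rw [pRep_mulVec_bigE e hmul, blockSMul_bigE, blockSMul_bigE, pRep_mulVec_bigE e hmul]
    have hq : (fun t => (A.mulVec w) t * star q) = A.mulVec (fun t => w t * star q) := by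
      funext t
      simp only [Matrix.mulVec, dotProduct]
      rw [Finset.sum_mul]
      exact Finset.sum_congr rfl fun t' _ => (mul_assoc _ _ _)
    rw [hq]
  have hinv : ∀ (q : Quaternion ℝ) (x : Fin m × Fin 4 → ℝ), x ∈ W → blockSMul e q x ∈ W := by
    intro q x hx
    obtain ⟨y, rfl⟩ := hx
    refine ⟨blockSMul e q y, ?_⟩
    rw [Matrix.mulVecLin_apply, Matrix.mulVecLin_apply, ← hcomm]
  letI : SMul (Quaternion ℝ) ↥W := ⟨fun q w => ⟨blockSMul e q w.1, hinv q w.1 w.2⟩⟩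
  letI : MulAction (Quaternion ℝ) ↥W :=
    { one_smul := fun w => Subtype.ext (blockSMul_one e w.1)
      mul_smul := fun q q' w => Subtype.ext (blockSMul_mul e q q' w.1) }
  letI : DistribMulAction (Quaternion ℝ) ↥W :=
    { smul_zero := fun q => Subtype.ext ((blockSMul e q).map_zero)
      smul_add := fun q w w' => Subtype.ext ((blockSMul e q).map_add w.1 w'.1) }
  letI : Module (Quaternion ℝ) ↥W :=
    { add_smul := fun q q' w => Subtype.ext (blockSMul_addq e q q' w.1)
      zero_smul := fun w => Subtype.ext (blockSMul_zeroq e w.1) }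
  letI : IsScalarTower ℝ (Quaternion ℝ) ↥W :=
    ⟨fun r q w => Subtype.ext (blockSMul_smulq e r q w.1)⟩
  have htower := Module.finrank_mul_finrank ℝ (Quaternion ℝ) ↥W
  rw [Quaternion.finrank_eq_four] at htower
  have hrank : (pRep H J K A).rank = Module.finrank ℝ ↥W := by rw [Matrix.rank, hW]
  refine ⟨Module.finrank (Quaternion ℝ) ↥W, ?_, by rw [hrank, ← htower]⟩
  have hle : (pRep H J K A).rank ≤ Fintype.card (Fin n × Fin 4) :=
    Matrix.rank_le_card_width _
  rw [hrank, ← htower] at hle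
  simp only [Fintype.card_prod, Fintype.card_fin] at hle
  omega
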